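/- Let x, y be words of equal length with x·y ≠ y·x. If w is a list over {x,y} of length at least 2 that is primitive (as a list) and concat w is imprimitive, then x and y are not conjugate. -/

import Mathlib

/-- `wpow u n` is the `n`-fold concatenation of `u` with itself. -/
def wpow {α : Type*} (u : List α) (n : ℕ) : List α := (List.replicate n u).flatten

/-- Primitivity: nonempty and not a proper power. -/
def Prim {α : Type*} (w : List α) : Prop := w ≠ [] ∧ ∀ (t : List α) (k : ℕ), 2 ≤ k → w ≠ wpow t k

/-- A word is imprimitive if it is empty or a proper power. -/
def Imprim {α : Type*} (w : List α) : Prop := ∃ (t : List α) (k : ℕ), 2 ≤ k ∧ w = wpow t k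

section Aux
variable {α : Type*}

private lemma wpow_succ' (t : List α) (k : ℕ) : wpow t (k+1) = t ++ wpow t k := by
  simp [wpow, List.replicate_succ]

private lemma wpow_length' (t : List α) (k : ℕ) : (wpow t k).length = k * t.length := by
  induction k with
  | zero => simp [wpow]
  | succ k ih => rw [wpow_succ']; simp [ih]; ring

private lemma wpow_getElem?' (t : List α) (k i : ℕ) (h : i < k * t.length) :
    (wpow t k)[i]? = t[i % t.length]? := by
  induction k generalizing i with
  | zero => omega
  | succ k ih =>
    rw [wpow_succ']
    rcases Nat.lt_or_ge i t.length with hi | hi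
    · rw [List.getElem?_append_left hi, Nat.mod_eq_of_lt hi]
    · rw [List.getElem?_append_right hi, ih _ (by rw [Nat.succ_mul] at h; omega)]
      rw [Nat.mod_eq_sub_mod hi]

private lemma flatten_length_const {w : List (List α)} {n : ℕ} (hw : ∀ a ∈ w, a.length = n) :
    w.flatten.length = w.length * n := by
  induction w with
  | nil => simp
  | cons a t ih =>
    simp only [List.flatten_cons, List.length_append, List.length_cons]
    rw [ih (fun b hb => hw b (List.mem_cons_of_mem a hb)), hw a (List.mem_cons_self)]
    ring

private lemma flatten_getElem?_const {w : List (List α)} {n : ℕ} (hw : ∀ a ∈ w, a.length = n)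
    {j i : ℕ} (hj : j < w.length) (hi : i < n) :
    w.flatten[j*n + i]? = (w[j])[i]? := by
  induction w generalizing j with
  | nil => simp at hj
  | cons a t ih =>
    have ha : a.length = n := hw a (List.mem_cons_self)
    cases j with
    | zero =>
      simp only [List.flatten_cons]
      rw [List.getElem?_append_left (by omega : 0*n + i < a.length)]
      simp
    | succ j =>
      simp only [List.flatten_cons]
      rw [List.getElem?_append_right (by rw [ha, Nat.succ_mul]; omega : a.length ≤ (j+1)*n + i)]
      have h1 : (j+1)*n + i - a.length = j*n + i := by rw [ha, Nat.succ_mul]; omega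
      simp only [List.length_cons] at hj
      rw [h1, ih (fun b hb => hw b (List.mem_cons_of_mem a hb)) (by omega)]
      simp

section FnPer
variable {β : Type*} (v : ℕ → β)

private lemma periter {N : ℕ} (hper : ∀ a, v (a + N) = v a) : ∀ (t a : ℕ), v (a + t*N) = v a := by
  intro t
  induction t with
  | zero => simp
  | succ t ih => intro a; rw [Nat.succ_mul, ← Nat.add_assoc, hper, ih]

private lemma per_of_modeq {N : ℕ} (hper : ∀ a, v (a + N) = v a) {A B : ℕ} (h : A ≡ B [MOD N]) :
    v A = v B := by
  rcases Nat.le_total A B with hle | hle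
  · obtain ⟨t, ht⟩ := (Nat.modEq_iff_dvd' hle).mp h
    rw [show B = A + t*N by rw [Nat.mul_comm]; omega, periter v hper]
  · obtain ⟨t, ht⟩ := (Nat.modEq_iff_dvd' hle).mp h.symm
    rw [show A = B + t*N by rw [Nat.mul_comm]; omega, periter v hper]

private lemma fullN {N s c : ℕ} (hN : 0 < N) (hper : ∀ a, v (a + N) = v a)
    (harc : ∀ θ, c ≤ θ → θ < c + N → v (θ + s) = v θ) : ∀ θ, v (θ + s) = v θ := by
  intro θ
  set θ' := c + (θ + N*(c/N + 1) - c) % N with hθ'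
  have hc1 : c ≤ θ + N*(c/N + 1) := by
    have h1 := Nat.div_add_mod c N
    have h2 := Nat.mod_lt c hN
    nlinarith
  have hfac : ∀ (a t : ℕ), a + N*t ≡ a [MOD N] := fun a t =>
    by simpa using (Nat.ModEq.add_left a (Nat.modEq_zero_iff_dvd.mpr ⟨t, rfl⟩))
  have h1 : θ' ≡ θ [MOD N] := by
    have hsplit : θ + N*(c/N + 1) - c = (θ + N*(c/N + 1) - c) % N + N * ((θ + N*(c/N + 1) - c)/N) := by
      rw [Nat.mod_add_div]
    calc θ' ≡ θ' + N * ((θ + N*(c/N + 1) - c)/N) [MOD N] := (hfac _ _).symm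
    _ = θ + N*(c/N + 1) := by omega
    _ ≡ θ [MOD N] := hfac _ _
  have h2 : v (θ' + s) = v θ' :=
    harc θ' (by omega) (by have := Nat.mod_lt (θ + N*(c/N + 1) - c) hN; omega)
  calc v (θ + s) = v (θ' + s) := per_of_modeq v hper (Nat.ModEq.add_right s h1.symm)
  _ = v θ' := h2
  _ = v θ := per_of_modeq v hper h1

private lemma lemA {N h c Q : ℕ} (hh : 0 < h) (hQ : 0 < Q) (hN : N = Q * h)
    (hper : ∀ a, v (a + N) = v a)
    (harc : ∀ θ, c ≤ θ → θ < c + (N - h) → v (θ + h) = v θ) : ∀ θ, v (θ + h) = v θ := by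
  have hNpos : 0 < N := hN ▸ Nat.mul_pos hQ hh
  have m1 : (Q-1)*h = Q*h - 1*h := Nat.sub_mul Q 1 h
  have m2 : (Q-2)*h = Q*h - 2*h := Nat.sub_mul Q 2 h
  have chain : ∀ j, j ≤ Q - 1 → ∀ ψ, c ≤ ψ → ψ < c + h → v (ψ + j*h) = v ψ := by
    intro j
    induction j with
    | zero => intro _ ψ _ _; simp
    | succ j ih =>
      intro hj ψ hψ1 hψ2
      have hQ2 : 2 ≤ Q := by omega
      have hjh : j*h ≤ (Q-2)*h := Nat.mul_le_mul_right h (by omega)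
      have h2Q : 2*h ≤ Q*h := Nat.mul_le_mul_right h hQ2
      have hstep : v ((ψ + j*h) + h) = v (ψ + j*h) := harc _ (by omega) (by omega)
      calc v (ψ + (j+1)*h) = v ((ψ + j*h) + h) := by ring_nf
      _ = v (ψ + j*h) := hstep
      _ = v ψ := ih (by omega) ψ hψ1 hψ2
  apply fullN v hNpos hper (c := c)
  intro θ hθ1 hθ2
  set ψ := c + (θ - c) % h with hψ
  set j := (θ - c) / h with hj
  have hmd : (θ - c) % h + h * ((θ - c)/h) = θ - c := Nat.mod_add_div _ _
  have hθψ : θ = ψ + j*h := by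
    rw [hψ, hj, Nat.mul_comm ((θ - c)/h) h]; omega
  have hψ2 : ψ < c + h := by have := Nat.mod_lt (θ - c) hh; omega
  have hjQ : j ≤ Q - 1 := by
    have hd : j * h ≤ θ - c := by rw [hj]; exact Nat.div_mul_le_self _ _
    have hθc : θ - c < N := by omega
    by_contra hcon
    have : Q * h ≤ j * h := Nat.mul_le_mul_right h (by omega)
    omega
  rcases Nat.lt_or_ge j (Q-1) with hlt | hge
  · have h0Q : 0 < Q - 1 := lt_of_le_of_lt (Nat.zero_le j) hlt
    have hQ2 : 2 ≤ Q := by omega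
    have h2Q : 2*h ≤ Q*h := Nat.mul_le_mul_right h hQ2
    have e1 : h * ((θ - c)/h) ≤ h * (Q-2) := Nat.mul_le_mul_left h (by rw [← hj]; omega)
    have e2 : h * (Q - 2) = (Q-2) * h := Nat.mul_comm _ _
    have e3 := Nat.mod_lt (θ - c) hh
    exact harc θ hθ1 (by omega)
  · have hjeq : j = Q - 1 := by omega
    have hhQ : 1*h ≤ Q*h := Nat.mul_le_mul_right h hQ
    have h1 : v (θ + h) = v ψ := by
      rw [show θ + h = ψ + N by rw [hθψ, hjeq]; omega, hper]
    have h2 : v θ = v ψ := by rw [hθψ]; exact chain j hjQ ψ (by omega) hψ2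
    rw [h1, h2]
end FnPer

private lemma mod_of_step {l : List α} {c : ℕ} (hc : 0 < c)
    (h : ∀ j, j + c < l.length → l[j+c]? = l[j]?) :
    ∀ i, i < l.length → l[i]? = l[i % c]? := by
  intro i
  induction i using Nat.strong_induction_on with
  | _ i ih =>
    intro hi
    rcases Nat.lt_or_ge i c with hic | hic
    · rw [Nat.mod_eq_of_lt hic]
    · have h1 : (i - c) + c < l.length := by omega
      have h2 := h (i - c) h1
      rw [show i = (i - c) + c by omega, h2, ih (i - c) (by omega) (by omega)]
      congr 1
      rw [Nat.sub_add_cancel hic, ← Nat.mod_eq_sub_mod hic]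

private lemma power_of_mod {l : List α} {c : ℕ} (hc : 0 < c) (hcle : c ≤ l.length)
    (hdvd : c ∣ l.length) (h : ∀ i, i < l.length → l[i]? = l[i % c]?) :
    l = wpow (l.take c) (l.length / c) := by
  have htl : (l.take c).length = c := by rw [List.length_take]; omega
  have hlen : (wpow (l.take c) (l.length / c)).length = l.length := by
    rw [wpow_length', htl, Nat.div_mul_cancel hdvd]
  apply List.ext_getElem?
  intro i
  rcases Nat.lt_or_ge i l.length with hi | hi
  · rw [wpow_getElem?' _ _ _ (by rw [htl, Nat.div_mul_cancel hdvd]; exact hi), htl,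
      List.getElem?_take, if_pos (Nat.mod_lt _ hc), h i hi]
  · rw [List.getElem?_eq_none (by omega), List.getElem?_eq_none (by omega)]

end Aux

/-- If `x`,`y` have equal length and don't commute, and a primitive list `w` over `{x,y}`
of length at least 2 has imprimitive concatenation, then `x` and `y` are not conjugate. -/
theorem bin_imprim_not_conjug {α : Type*} (x y : List α) (w : List (List α))
    (hlen : x.length = y.length) (hcomm : x ++ y ≠ y ++ x)
    (hw : ∀ a ∈ w, a = x ∨ a = y) (hwlen : 2 ≤ w.length)
    (hwprim : Prim w) (himprim : Imprim w.flatten) :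
    ¬ ∃ r q : List α, x = r ++ q ∧ y = q ++ r := by
  rintro ⟨r, q, hxrq, hyqr⟩
  classical
  set n := x.length with hn
  have hxy : x ≠ y := fun h => hcomm (by rw [h])
  have hrne : r ≠ [] := by rintro rfl; exact hxy (by rw [hxrq, hyqr]; simp)
  have hqne : q ≠ [] := by rintro rfl; exact hxy (by rw [hxrq, hyqr]; simp)
  set ρ := r.length with hρdef
  have hρ1 : 0 < ρ := List.length_pos_iff.mpr hrne
  have hq1 : 0 < q.length := List.length_pos_iff.mpr hqne
  have hnrq : n = ρ + q.length := by rw [hn, hxrq, List.length_append]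
  have hρ2 : ρ < n := by omega
  have hn0 : 0 < n := by omega
  set m := w.length with hm
  have hm2 : 2 ≤ m := hwlen
  have hbl : ∀ a ∈ w, a.length = n := by
    intro a ha
    rcases hw a ha with rfl | rfl
    · rfl
    · exact hlen.symm
  set z := w.flatten with hz
  have hzlen : z.length = m * n := flatten_length_const hbl
  obtain ⟨t, k, hk2, hzt⟩ := himprim
  set L := m * n with hLdef
  have hL0 : 0 < L := by positivity
  have hLk : L = k * t.length := by rw [← hzlen, hzt, wpow_length']
  have ht0 : 0 < t.length := by
    rcases Nat.eq_zero_or_pos t.length with h0 | h; · rw [h0, Nat.mul_zero] at hLk; omega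
    exact h
  set f : ℕ → Option α := fun i => z[i % L]? with hfdef
  have hfz : ∀ i, i < L → f i = z[i]? := by
    intro i hi; simp only [hfdef]; rw [Nat.mod_eq_of_lt hi]
  have hft : ∀ j, f j = t[j % t.length]? := by
    intro j
    simp only [hfdef]
    rw [hzt, wpow_getElem?' _ _ _ (by rw [← hLk]; exact Nat.mod_lt _ hL0),
      Nat.mod_mod_of_dvd _ ⟨k, by rw [hLk]; ring⟩]
  have hfper0 : ∀ i, f (i + t.length) = f i := by
    intro i; rw [hft, hft, Nat.add_mod_right]
  have hex : ∃ d, 0 < d ∧ ∀ i, f (i + d) = f i := ⟨t.length, ht0, hfper0⟩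
  set p := Nat.find hex with hpdef
  obtain ⟨hp0, hpper⟩ : 0 < p ∧ ∀ i, f (i + p) = f i := Nat.find_spec hex
  have hmin : ∀ c, 0 < c → (∀ i, f (i + c) = f i) → p ∣ c := by
    intro c hc hfc
    rcases Nat.eq_zero_or_pos (c % p) with h0 | hpos
    · exact Nat.dvd_of_mod_eq_zero h0
    · exfalso
      have hr : ∀ i, f (i + c % p) = f i := by
        intro i
        have h1 : f (i + c % p + (c/p)*p) = f (i + c % p) := periter f hpper _ _
        have h2 : i + c % p + (c/p)*p = i + c := by
          rw [Nat.mul_comm]; have := Nat.mod_add_div c p; omega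
        rw [h2] at h1; rw [← h1, hfc]
      exact Nat.find_min hex (Nat.mod_lt c hp0) ⟨hpos, hr⟩
  have hpt : p ≤ t.length := Nat.find_min' hex ⟨ht0, hfper0⟩
  have hp2L : 2 * p ≤ L := by
    have : 2*t.length ≤ k * t.length := Nat.mul_le_mul_right _ hk2
    omega
  have hpL : p ∣ L := hmin L (by omega) (fun i => by simp only [hfdef]; rw [Nat.add_mod_right])
  have hfmod : ∀ A B, A ≡ B [MOD p] → f A = f B := fun A B h => per_of_modeq f hpper h
  have hblock : ∀ j (hj : j < m) i (hi : i < n), f (j*n + i) = (w[j]'hj)[i]? := by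
    intro j hj i hi
    have h2 : (j+1)*n ≤ m*n := Nat.mul_le_mul_right _ hj
    rw [Nat.succ_mul] at h2
    rw [hfz _ (by omega)]
    exact flatten_getElem?_const hbl hj hi
  -- the list-power contradiction generator
  have hpow : ∀ c, 0 < c → c < m → c ∣ m → (∀ j, j + c < m → w[j+c]? = w[j]?) → False := by
    intro c h0 hlt hdvd hstep
    rw [hm] at hlt hdvd hstep
    have hd2 : 2 ≤ w.length / c :=
      (Nat.lt_div_iff_mul_lt' hdvd 1).mpr (by omega)
    exact hwprim.2 _ _ hd2 (power_of_mod h0 (by omega) hdvd (mod_of_step h0 hstep))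
  -- gcd structure
  set g := Nat.gcd p n with hgdef
  have hg0 : 0 < g := Nat.gcd_pos_of_pos_left _ hp0
  obtain ⟨p', hp'⟩ : g ∣ p := Nat.gcd_dvd_left _ _
  obtain ⟨K, hK⟩ : g ∣ n := Nat.gcd_dvd_right _ _
  have hcop : Nat.Coprime p' K := by
    have h1 := Nat.coprime_div_gcd_div_gcd (m := p) (n := n) hg0
    rw [← hgdef, hp', hK, Nat.mul_div_cancel_left _ hg0, Nat.mul_div_cancel_left _ hg0] at h1
    exact h1
  have hCm : p' ∣ m := by
    obtain ⟨s, hs⟩ := hpL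
    have h1 : g * (m * K) = g * (p' * s) := by
      calc g * (m * K) = m * (g * K) := by ring
      _ = m * n := by rw [hK]
      _ = p * s := hs
      _ = g * (p' * s) := by rw [hp']; ring
    have h2 : m * K = p' * s := Nat.eq_of_mul_eq_mul_left hg0 h1
    exact hcop.dvd_of_dvd_mul_right ⟨s, h2⟩
  have hp'0 : 0 < p' := by
    rcases Nat.eq_zero_or_pos p' with h0 | h; · rw [h0, Nat.mul_zero] at hp'; omega
    exact h
  have hK0 : 0 < K := by
    rcases Nat.eq_zero_or_pos K with h0 | h; · rw [h0, Nat.mul_zero] at hK; omega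
    exact h
  -- superblock periodicity forces p' = m
  have hp'm : p' = m := by
    by_contra hne
    have hlt : p' < m := lt_of_le_of_ne (Nat.le_of_dvd (by omega) hCm) hne
    apply hpow p' hp'0 hlt hCm
    intro j hj
    rw [List.getElem?_eq_getElem (show j + p' < m from hj),
      List.getElem?_eq_getElem (show j < m by omega)]
    congr 1
    apply List.ext_getElem?
    intro i
    rcases Nat.lt_or_ge i n with hi | hi
    · rw [← hblock _ hj i hi, ← hblock _ (by omega : j < m) i hi]
      have he : (j + p')*n + i = (j*n + i) + K * p := by rw [hp', hK]; ring
      rw [he, periter f hpper]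
    · rw [List.getElem?_eq_none (by rw [hbl _ (List.getElem_mem _)]; omega),
        List.getElem?_eq_none (by rw [hbl _ (List.getElem_mem _)]; omega)]
  have hpgm : p = g * m := by rw [hp', hp'm]
  have hK2 : 2 ≤ K := by
    have hLpK : L = p * K := by rw [hLdef, hK, hpgm]; ring
    by_contra hcon
    interval_cases K <;> omega
  have hcop2 : Nat.Coprime m K := by rw [← hp'm]; exact hcop
  -- both letters occur among the blocks
  have hxocc : ∃ j, ∃ hj : j < m, w[j]'hj = x := by
    by_contra hno
    push_neg at hno
    apply hpow 1 one_pos (by omega) (one_dvd m)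
    intro j hj
    rw [List.getElem?_eq_getElem (show j + 1 < m from hj),
      List.getElem?_eq_getElem (show j < m by omega)]
    congr 1
    have h1 : w[j+1]'hj = y := by
      rcases hw (w[j+1]'hj) (List.getElem_mem _) with h | h
      · exact absurd h (hno (j+1) hj)
      · exact h
    have h2 : w[j]'(by omega : j < m) = y := by
      rcases hw (w[j]'(by omega : j < m)) (List.getElem_mem _) with h | h
      · exact absurd h (hno j (by omega))
      · exact h
    rw [h1, h2]
  have hyocc : ∃ j, ∃ hj : j < m, w[j]'hj = y := by
    by_contra hno
    push_neg at hno
    apply hpow 1 one_pos (by omega) (one_dvd m)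
    intro j hj
    rw [List.getElem?_eq_getElem (show j + 1 < m from hj),
      List.getElem?_eq_getElem (show j < m by omega)]
    congr 1
    have h1 : w[j+1]'hj = x := by
      rcases hw (w[j+1]'hj) (List.getElem_mem _) with h | h
      · exact h
      · exact absurd h (hno (j+1) hj)
    have h2 : w[j]'(by omega : j < m) = x := by
      rcases hw (w[j]'(by omega : j < m)) (List.getElem_mem _) with h | h
      · exact h
      · exact absurd h (hno j (by omega))
    rw [h1, h2]
  -- modular inverse machinery
  haveI : NeZero m := ⟨by omega⟩
  set jf : ℕ → ℕ := fun i => ((i : ZMod m) * (K : ZMod m)⁻¹).val with hjfdef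
  have hjflt : ∀ i, jf i < m := fun i => ZMod.val_lt _
  have hKunit : (K : ZMod m) * (K : ZMod m)⁻¹ = 1 := ZMod.coe_mul_inv_eq_one K hcop2.symm
  have hjfK : ∀ i, jf i * K ≡ i [MOD m] := by
    intro i
    have h1 : ((jf i * K : ℕ) : ZMod m) = ((i : ℕ) : ZMod m) := by
      push_cast
      simp only [hjfdef]
      rw [ZMod.natCast_rightInverse _]
      rw [mul_assoc, mul_comm ((K : ZMod m))⁻¹ (K : ZMod m), hKunit, mul_one]
    exact (ZMod.natCast_eq_natCast_iff _ _ _).mp h1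
  have hjuniq : ∀ j j', j < m → j' < m → j * K ≡ j' * K [MOD m] → j = j' := by
    intro j j' hjm hj'm hmod
    have h1 : ((j*K : ℕ) : ZMod m) = ((j'*K : ℕ) : ZMod m) :=
      (ZMod.natCast_eq_natCast_iff _ _ _).mpr hmod
    push_cast at h1
    have h2 : (j : ZMod m) = (j' : ZMod m) := by
      have h3 := congrArg (· * (K : ZMod m)⁻¹) h1
      simpa [mul_assoc, hKunit] using h3
    have h4 := congrArg ZMod.val h2
    rwa [ZMod.val_cast_of_lt hjm, ZMod.val_cast_of_lt hj'm] at h4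
  -- the window sequence
  set B : ℕ → List α := fun i => w[jf (i % m)]'(hjflt _) with hBdef
  have hBmem : ∀ i, B i = x ∨ B i = y := fun i => hw _ (List.getElem_mem _)
  have hBper : ∀ i, B (i + m) = B i := by
    intro i; simp only [hBdef, Nat.add_mod_right]
  have hoff : ∀ i, jf (i % m) * n ≡ i * g [MOD p] := by
    intro i
    have h1 : jf (i % m) * K ≡ i % m [MOD m] := hjfK _
    have h2 : jf (i % m) * K * g ≡ (i % m) * g [MOD m * g] := h1.mul_right' g
    have h3 : (i % m) * g ≡ i * g [MOD m * g] := (Nat.mod_modEq i m).mul_right' g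
    have h4 : jf (i % m) * n = jf (i % m) * K * g := by rw [hK]; ring
    have h5 : p = m * g := by rw [hpgm]; ring
    rw [h4, h5]
    exact h2.trans h3
  have hBget : ∀ i θ, θ < n → (B i)[θ]? = f (jf (i % m) * n + θ) := by
    intro i θ hθ
    rw [hblock _ (hjflt _) θ hθ]
  have hBrel : ∀ i θ, θ + g < n → (B (i+1))[θ]? = (B i)[θ + g]? := by
    intro i θ hθ
    rw [hBget _ _ (by omega), hBget _ _ (by omega)]
    apply hfmod
    calc jf ((i+1) % m) * n + θ ≡ (i+1)*g + θ [MOD p] := (hoff (i+1)).add_right θ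
    _ = (i*g + θ) + g := by ring
    _ ≡ (jf (i % m) * n + θ) + g [MOD p] := (((hoff i).symm).add_right θ).add_right g
    _ = jf (i % m) * n + (θ + g) := by ring
  have hBofj : ∀ j (hj : j < m), B (j * K) = w[j]'hj := by
    intro j hj
    have h1 : jf (j*K % m) = j := by
      apply hjuniq _ _ (hjflt _) hj
      calc jf (j*K % m) * K ≡ j*K % m [MOD m] := hjfK _
      _ ≡ j * K [MOD m] := Nat.mod_modEq _ _
    simp only [hBdef, h1]
  have hBx : ∃ i, B i = x := by
    obtain ⟨j, hj, hjx⟩ := hxocc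
    exact ⟨j * K, by rw [hBofj j hj]; exact hjx⟩
  have hBy : ∃ i, B i = y := by
    obtain ⟨j, hj, hjy⟩ := hyocc
    exact ⟨j * K, by rw [hBofj j hj]; exact hjy⟩
  -- cyclic views of x and y
  set xcf : ℕ → Option α := fun θ => x[θ % n]? with hxcfdef
  have hxper : ∀ a, xcf (a + n) = xcf a := by
    intro a; simp only [hxcfdef, Nat.add_mod_right]
  have hxlt : ∀ i, i < n → xcf i = x[i]? := by
    intro i hi; simp only [hxcfdef]; rw [Nat.mod_eq_of_lt hi]
  have hqlen : q.length = n - ρ := by omega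
  have hygx : ∀ i, i < n → y[i]? = xcf (i + ρ) := by
    intro i hi
    simp only [hxcfdef]
    rcases Nat.lt_or_ge i (n - ρ) with hiq | hiq
    · rw [show (i + ρ) % n = i + ρ from Nat.mod_eq_of_lt (by omega)]
      rw [hyqr, List.getElem?_append_left (by omega), hxrq,
        List.getElem?_append_right (by omega : r.length ≤ i + ρ)]
      congr 1
      omega
    · rw [show (i + ρ) % n = i + ρ - n by
        rw [Nat.mod_eq_sub_mod (by omega), Nat.mod_eq_of_lt (by omega)]]
      rw [hyqr, List.getElem?_append_right (by omega : q.length ≤ i), hxrq,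
        List.getElem?_append_left (by omega : i + ρ - n < r.length)]
      congr 1
      omega
  have hxgy : ∀ i, i < n → x[i]? = y[(i + (n - ρ)) % n]? := by
    intro i hi
    rcases Nat.lt_or_ge i ρ with hir | hir
    · rw [show (i + (n - ρ)) % n = i + (n - ρ) from Nat.mod_eq_of_lt (by omega)]
      rw [hxrq, List.getElem?_append_left (by omega : i < r.length), hyqr,
        List.getElem?_append_right (by omega : q.length ≤ i + (n - ρ))]
      congr 1
      omega
    · rw [show (i + (n - ρ)) % n = i - ρ by
        rw [Nat.mod_eq_sub_mod (by omega), Nat.mod_eq_of_lt (by omega)]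
        omega]
      rw [hxrq, List.getElem?_append_right (by omega : r.length ≤ i), hyqr,
        List.getElem?_append_left (by omega : i - ρ < q.length)]
  have hgn : g ∣ n := ⟨K, hK⟩
  have h2gn : 2*g ≤ n := by
    have := Nat.mul_le_mul_left g hK2
    rw [← hK] at this
    omega
  have hgmodx : (∀ a, xcf (a + g) = xcf a) → ∀ A B', A ≡ B' [MOD g] → xcf A = xcf B' :=
    fun hPi A B' h => per_of_modeq xcf hPi h
  by_cases hAlt : ∀ i, B (i+1) ≠ B i
  · -- alternating case
    have htwo : ∀ i, B (i+2) = B i := by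
      intro i
      rcases hBmem (i+1) with h1 | h1
      · have h0 : B i = y := by
          rcases hBmem i with h | h
          · exact absurd (h1.trans h.symm) (hAlt i)
          · exact h
        have h2 : B (i+2) = y := by
          rcases hBmem (i+2) with h | h
          · exact absurd (h.trans h1.symm) (hAlt (i+1))
          · exact h
        rw [h0, h2]
      · have h0 : B i = x := by
          rcases hBmem i with h | h
          · exact h
          · exact absurd (h1.trans h.symm) (hAlt i)
        have h2 : B (i+2) = x := by
          rcases hBmem (i+2) with h | h
          · exact h
          · exact absurd (h.trans h1.symm) (hAlt (i+1))
        rw [h0, h2]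
    have htwot : ∀ s i, B (i + 2*s) = B i := by
      intro s
      induction s with
      | zero => intro i; simp
      | succ s ih =>
        intro i
        have : i + 2*(s+1) = (i + 2) + 2*s := by ring
        rw [this, ih, htwo]
    have hmeven : m % 2 = 0 := by
      by_contra hodd2
      have hm1 : B m = B 0 := by
        have := hBper 0; simpa using this
      have hm1' : B m = B 1 := by
        have he : m = 1 + 2*(m/2) := by omega
        rw [he, htwot]
      exact hAlt 0 (by simpa using (hm1'.symm.trans hm1))
    have hKodd : K % 2 = 1 := by
      rcases Nat.even_or_odd K with he | ho
      · exfalso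
        have h2 : (2:ℕ) ∣ Nat.gcd m K :=
          Nat.dvd_gcd (Nat.dvd_of_mod_eq_zero hmeven) he.two_dvd
        rw [hcop2] at h2
        omega
      · obtain ⟨c, hc⟩ := ho
        omega
    have hw2 : ∀ j, j + 2 < m → w[j+2]? = w[j]? := by
      intro j hj
      rw [List.getElem?_eq_getElem (show j + 2 < m from hj),
        List.getElem?_eq_getElem (show j < m by omega)]
      congr 1
      rw [← hBofj j (by omega), ← hBofj (j+2) hj]
      have he : (j+2)*K = j*K + 2*K := by ring
      rw [he, htwot]
    rcases Nat.lt_or_ge m 3 with hm3 | hm4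
    · -- ENDGAME : m = 2
      have hm2' : m = 2 := by omega
      set c := K / 2 with hcdef
      have hKo : K = 2*c + 1 := by omega
      have hK3 : 3 ≤ K := by omega
      have h0m : 0 < m := by omega
      have h1m : 1 < m := by omega
      have hpg2 : p = 2 * g := by rw [hpgm, hm2']; ring
      have ha0 : w[0]'h0m = B 0 := by
        have h1 := hBofj 0 h0m
        rw [Nat.zero_mul] at h1
        exact h1.symm
      have hbk : B K = w[1]'h1m := by
        have h1 := hBofj 1 h1m
        rwa [Nat.one_mul] at h1
      have ha1 : w[1]'h1m = B 1 := by
        rw [← hbk, show K = 1 + 2*c by omega, htwot]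
      have hne01 : w[0]'h0m ≠ w[1]'h1m := by
        rw [ha0, ha1]
        intro hcon
        exact hAlt 0 (by simpa using hcon.symm)
      obtain ⟨σ, hσ1, hσ2, hget⟩ : ∃ σ, 0 < σ ∧ σ < n ∧
          ∀ i, i < n → (w[1]'h1m)[i]? = (w[0]'h0m)[(i + σ) % n]? := by
        rcases hw (w[0]'h0m) (List.getElem_mem _) with h0x | h0y
        · have h1y : w[1]'h1m = y := by
            rcases hw (w[1]'h1m) (List.getElem_mem _) with hh | hh
            · exact absurd ((hh.trans h0x.symm).symm) hne01
            · exact hh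
          refine ⟨ρ, hρ1, hρ2, ?_⟩
          intro i hi
          rw [h1y, h0x, hygx i hi]
        · have h1x : w[1]'h1m = x := by
            rcases hw (w[1]'h1m) (List.getElem_mem _) with hh | hh
            · exact hh
            · exact absurd ((hh.trans h0y.symm).symm) hne01
          refine ⟨n - ρ, by omega, by omega, ?_⟩
          intro i hi
          rw [h1x, h0y]
          exact hxgy i hi
      have hf0 : ∀ i, i < n → f i = (w[0]'h0m)[i]? := by
        intro i hi
        have h1 := hblock 0 h0m i hi
        rwa [Nat.zero_mul, Nat.zero_add] at h1
      have hf1 : ∀ i, i < n → f (n + i) = (w[1]'h1m)[i]? := by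
        intro i hi
        have h1 := hblock 1 h1m i hi
        rwa [Nat.one_mul] at h1
      set s1 := n - σ with hs1def
      have hσs : σ + s1 = n := by omega
      have hrel1 : ∀ θ, σ ≤ θ → θ < n → f (θ + s1) = f θ := by
        intro θ hθ1 hθ2
        have hi : θ - σ < n := by omega
        have e1 := hget (θ - σ) hi
        rw [show θ - σ + σ = θ by omega, Nat.mod_eq_of_lt hθ2] at e1
        rw [← hf0 θ hθ2, ← hf1 (θ - σ) hi] at e1
        rw [show n + (θ - σ) = θ + s1 by omega] at e1
        exact e1
      have hrel2 : ∀ θ, θ < σ → f (θ + (n + s1)) = f θ := by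
        intro θ hθ
        have hi : θ + s1 < n := by omega
        have e1 := hget (θ + s1) hi
        rw [show θ + s1 + σ = θ + n by omega, Nat.add_mod_right,
          Nat.mod_eq_of_lt (by omega : θ < n)] at e1
        rw [← hf0 θ (by omega), ← hf1 (θ + s1) hi] at e1
        rw [show n + (θ + s1) = θ + (n + s1) by omega] at e1
        exact e1
      have hgoalarc : ∀ c0 : ℕ, (∀ θ, c0 ≤ θ → θ < c0 + g → f (θ + g) = f θ) → False := by
        intro c0 harc
        have hfull : ∀ θ, f (θ + g) = f θ := by
          apply lemA f hg0 (show 0 < 2 by omega) (show p = 2*g from hpg2) hpper (c := c0)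
          intro θ h1 h2
          exact harc θ h1 (by omega)
        have hdvd := hmin g hg0 hfull
        have := Nat.le_of_dvd hg0 hdvd
        omega
      have hn' : n = g*(2*c+1) := by rw [hK]; congr 1
      have hng : 3*g ≤ n := by
        have h1 := Nat.mul_le_mul_left g hK3
        rw [← hK] at h1
        omega
      rcases Nat.lt_or_ge s1 (2*g) with hs1lt | hs1ge
      · rcases Nat.lt_or_ge σ (2*g) with hσlt | hσge
        · -- both σ < 2g and s1 < 2g
          have hσlow : n - 2*g < σ := by omega
          apply hgoalarc s1
          intro ψ h1' h2'
          set θ0 := ψ - s1 with hθ0def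
          have hθ0g : θ0 < g := by omega
          have e1 := hrel2 θ0 (by omega)
          have e2 := hrel1 (θ0 + 2*g) (by omega) (by omega)
          have p1 : f (θ0 + 2*g) = f θ0 := by
            have h1 := hpper θ0
            rwa [show θ0 + p = θ0 + 2*g by omega] at h1
          have p2 : f (θ0 + 2*g + s1) = f (θ0 + s1) := by
            have h1 := hpper (θ0 + s1)
            rwa [show θ0 + s1 + p = θ0 + 2*g + s1 by omega] at h1
          have p3 : f (θ0 + (n + s1)) = f (θ0 + s1 + g) := by
            have he : θ0 + (n + s1) = (θ0 + s1 + g) + c*p := by rw [hn', hpg2]; ring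
            rw [he, periter f hpper]
          have key : f (θ0 + s1 + g) = f (θ0 + s1) := by
            calc f (θ0 + s1 + g) = f (θ0 + (n + s1)) := p3.symm
            _ = f θ0 := e1
            _ = f (θ0 + 2*g) := p1.symm
            _ = f (θ0 + 2*g + s1) := e2.symm
            _ = f (θ0 + s1) := p2
          rw [show ψ + g = θ0 + s1 + g by omega, show ψ = θ0 + s1 by omega]
          exact key
        · -- σ ≥ 2g, s1 < 2g
          have hfull2 : ∀ θ, f (θ + (n + s1)) = f θ := by
            apply fullN f (show 0 < p by omega) hpper (c := 0)
            intro θ h1' h2'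
            exact hrel2 θ (by omega)
          obtain ⟨e, he⟩ := hmin (n + s1) (by omega) hfull2
          have hexpe : n + s1 = 2*(g*e) := by rw [he, hpg2]; ring
          have hexp2 : n = 2*(g*c) + g := by rw [hn']; ring
          have hs1pos : 0 < s1 := by omega
          have hb1 : g*(2*e) < g*(2*c+3) := by
            have ee1 : g*(2*e) = 2*(g*e) := by ring
            have ee2 : g*(2*c+3) = 2*(g*c) + 3*g := by ring
            omega
          have h2e : 2*e < 2*c+3 := Nat.lt_of_mul_lt_mul_left hb1
          have hb2 : g*(2*c+1) < g*(2*e) := by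
            have ee1 : g*(2*e) = 2*(g*e) := by ring
            have ee2 : g*(2*c+1) = 2*(g*c) + g := by ring
            omega
          have h2e' : 2*c+1 < 2*e := Nat.lt_of_mul_lt_mul_left hb2
          have hec : e = c + 1 := by omega
          have hs1g : s1 = g := by
            have h1' : n + s1 = 2*(g*(c+1)) := by rw [← hec]; exact hexpe
            have ee : 2*(g*(c+1)) = 2*(g*c) + 2*g := by ring
            omega
          apply hgoalarc σ
          intro θ h1' h2'
          have h3 := hrel1 θ h1' (by omega)
          rwa [hs1g] at h3
      · -- s1 ≥ 2g
        have hfull1 : ∀ θ, f (θ + s1) = f θ := by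
          apply fullN f (show 0 < p by omega) hpper (c := σ)
          intro θ h1' h2'
          exact hrel1 θ h1' (by omega)
        obtain ⟨d, hd⟩ := hmin s1 (by omega) hfull1
        have hexp1 : s1 = 2*(g*d) := by rw [hd, hpg2]; ring
        have hexp2 : n = 2*(g*c) + g := by rw [hn']; ring
        have hdc : d ≤ c := by
          have h1' : g*d < g*(c+1) := by
            have ee : g*(c+1) = g*c + g := by ring
            omega
          have h2' := Nat.lt_of_mul_lt_mul_left h1'
          omega
        have hgdc : g*d ≤ g*c := Nat.mul_le_mul_left g hdc
        apply hgoalarc 0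
        intro θ h0' hθg
        have e1 := hrel2 θ (by omega)
        have e2 : θ + (n + s1) = (θ + g) + (c + d)*p := by rw [hn', hd, hpg2]; ring
        rw [e2, periter f hpper] at e1
        exact e1
    · have hm4' : 4 ≤ m := by omega
      exact hpow 2 (by omega) (by omega) (Nat.dvd_of_mod_eq_zero hmeven) hw2
  · -- some adjacent pair of equal windows
    push_neg at hAlt
    obtain ⟨i₀, hi₀⟩ := hAlt
    have hbb : ∀ θ, θ + g < n → (B i₀)[θ]? = (B i₀)[θ + g]? := by
      intro θ hθ
      conv_lhs => rw [← hi₀]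
      exact hBrel i₀ θ hθ
    have hnKg : n = K * g := by rw [hK]; ring
    have hPi : ∀ θ, xcf (θ + g) = xcf θ := by
      rcases hBmem i₀ with hbx | hby
      · apply lemA xcf hg0 hK0 hnKg hxper (c := 0)
        intro θ hθ0 hθ1
        have h1 := hbb θ (by omega)
        rw [hbx] at h1
        rw [hxlt _ (by omega), hxlt _ (by omega)]
        exact h1.symm
      · set ycf : ℕ → Option α := fun θ => y[θ % n]? with hycfdef
        have hyper : ∀ a, ycf (a + n) = ycf a := by
          intro a; simp only [hycfdef, Nat.add_mod_right]
        have hylt : ∀ i, i < n → ycf i = y[i]? := by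
          intro i hi; simp only [hycfdef]; rw [Nat.mod_eq_of_lt hi]
        have hyPi : ∀ θ, ycf (θ + g) = ycf θ := by
          apply lemA ycf hg0 hK0 hnKg hyper (c := 0)
          intro θ hθ0 hθ1
          have h1 := hbb θ (by omega)
          rw [hby] at h1
          rw [hylt _ (by omega), hylt _ (by omega)]
          exact h1.symm
        have hxy2 : ∀ a, xcf a = ycf ((a % n) + (n - ρ)) := by
          intro a
          simp only [hxcfdef, hycfdef]
          rw [hxgy (a % n) (Nat.mod_lt _ hn0)]
        intro θ
        rw [hxy2, hxy2]
        apply per_of_modeq ycf hyPi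
        apply Nat.ModEq.add_right
        calc (θ + g) % n ≡ θ + g [MOD g] := ((Nat.mod_modEq _ n).of_dvd hgn)
        _ ≡ θ + 0 [MOD g] := by
          apply Nat.ModEq.add_left
          simpa using (Nat.modEq_zero_iff_dvd.mpr (dvd_refl g))
        _ = θ := by ring
        _ ≡ θ % n [MOD g] := ((Nat.mod_modEq _ n).of_dvd hgn).symm
    -- an adjacent unequal pair exists
    have hneq : ∃ i₁, B (i₁+1) ≠ B i₁ := by
      by_contra hno
      push_neg at hno
      have hconst : ∀ i, B i = B 0 := by
        intro i
        induction i with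
        | zero => rfl
        | succ i ih => rw [hno i, ih]
      obtain ⟨ix, hix⟩ := hBx
      obtain ⟨iy, hiy⟩ := hBy
      exact hxy (by rw [← hix, hconst ix, ← hconst iy, hiy])
    obtain ⟨i₁, hi₁⟩ := hneq
    have hθgn : ∀ θ : ℕ, θ % g + g < n := by
      intro θ
      have := Nat.mod_lt θ hg0
      omega
    have hfinal : ∀ θ, xcf (θ + ρ) = xcf θ := by
      have hgmod := hgmodx hPi
      rcases hBmem i₁ with h1 | h1 <;> rcases hBmem (i₁+1) with h2 | h2
      · exact absurd (h2.trans h1.symm) hi₁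
      · -- B i₁ = x, B (i₁+1) = y
        have hrel : ∀ θ, θ + g < n → xcf (θ + ρ) = xcf (θ + g) := by
          intro θ hθ
          have h3 := hBrel i₁ θ hθ
          rw [h1, h2] at h3
          rw [hygx θ (by omega), ← hxlt _ hθ] at h3
          exact h3
        intro θ
        calc xcf (θ + ρ) = xcf (θ % g + ρ) :=
              hgmod _ _ (((Nat.mod_modEq θ g).symm).add_right ρ)
        _ = xcf (θ % g + g) := hrel _ (hθgn θ)
        _ = xcf (θ % g) := hPi _
        _ = xcf θ := hgmod _ _ (Nat.mod_modEq θ g)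
      · -- B i₁ = y, B (i₁+1) = x
        have hrel : ∀ θ, θ + g < n → xcf θ = xcf (θ + g + ρ) := by
          intro θ hθ
          have h3 := hBrel i₁ θ hθ
          rw [h1, h2] at h3
          rw [← hxlt _ (by omega), hygx (θ + g) (by omega)] at h3
          exact h3
        intro θ
        calc xcf (θ + ρ) = xcf (θ % g + g + ρ) := by
              apply hgmod
              calc θ + ρ ≡ θ % g + ρ [MOD g] := ((Nat.mod_modEq θ g).symm).add_right ρ
              _ ≡ (θ % g + g) + ρ [MOD g] := by
                apply Nat.ModEq.add_right
                simpa using (Nat.ModEq.add_left (θ % g)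
                  (Nat.modEq_zero_iff_dvd.mpr (dvd_refl g))).symm
        _ = xcf (θ % g) := (hrel _ (hθgn θ)).symm
        _ = xcf θ := hgmod _ _ (Nat.mod_modEq θ g)
      · exact absurd (h2.trans h1.symm) hi₁
    -- conclude x = y
    apply hxy
    apply List.ext_getElem?
    intro i
    rcases Nat.lt_or_ge i n with hi | hi
    · rw [hygx i hi, hfinal, hxlt _ hi]
    · rw [List.getElem?_eq_none (by omega), List.getElem?_eq_none (by omega)]
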